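/- For all natural numbers r, n with 1 ≤ r ≤ n, one has |1/r! − C(n,r)/n^r| ≤ 2^r / (n · (r−1)!). -/

import Mathlib

open Finset

lemma aux_prod (r : ℕ) (f : ℕ → ℝ) (h0 : ∀ i ∈ range r, 0 ≤ f i) (h1 : ∀ i ∈ range r, f i ≤ 1) :
    1 - ∑ i ∈ range r, (1 - f i) ≤ ∏ i ∈ range r, f i := by
  induction r with
  | zero => simp
  | succ r ih =>
    rw [prod_range_succ, sum_range_succ]
    have h0' : ∀ i ∈ range r, 0 ≤ f i := fun i hi => h0 i (by simp at hi ⊢; omega)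
    have h1' : ∀ i ∈ range r, f i ≤ 1 := fun i hi => h1 i (by simp at hi ⊢; omega)
    have hP0 : 0 ≤ ∏ i ∈ range r, f i := prod_nonneg h0'
    have hP1 : ∏ i ∈ range r, f i ≤ 1 := prod_le_one h0' h1'
    have hfr0 : 0 ≤ f r := h0 r (by simp)
    have hfr1 : f r ≤ 1 := h1 r (by simp)
    nlinarith [ih h0' h1']

theorem abs_one_div_factorial_sub_choose_div_pow_le (r n : ℕ) (hr : 1 ≤ r) (hrn : r ≤ n) :
    |1 / (r.factorial : ℝ) - (n.choose r : ℝ) / (n : ℝ) ^ r| ≤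
      2 ^ r / ((n : ℝ) * ((r - 1).factorial : ℝ)) := by
  have hn0 : 0 < n := lt_of_lt_of_le hr hrn
  have hn : (0:ℝ) < n := by exact_mod_cast hn0
  set f : ℕ → ℝ := fun i => ((n:ℝ) - i) / n with hf
  have h0 : ∀ i ∈ range r, 0 ≤ f i := by
    intro i hi
    simp only [mem_range] at hi
    have : (i:ℝ) ≤ n := by exact_mod_cast le_of_lt (lt_of_lt_of_le hi hrn)
    have := sub_nonneg.mpr this
    positivity
  have h1 : ∀ i ∈ range r, f i ≤ 1 := by
    intro i hi
    rw [hf, div_le_one hn]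
    simp
  have hP0 : 0 ≤ ∏ i ∈ range r, f i := prod_nonneg h0
  have hP1 : ∏ i ∈ range r, f i ≤ 1 := prod_le_one h0 h1
  -- cast descFactorial
  have hcast : ((n.descFactorial r : ℕ) : ℝ) = ∏ i ∈ range r, ((n:ℝ) - i) := by
    rw [Nat.descFactorial_eq_prod_range]
    push_cast
    refine prod_congr rfl ?_
    intro i hi
    simp only [mem_range] at hi
    rw [Nat.cast_sub (le_of_lt (lt_of_lt_of_le hi hrn))]
  have hchoose : (n.choose r : ℝ) / (n:ℝ)^r = (∏ i ∈ range r, f i) / (r.factorial : ℝ) := by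
    have h := Nat.descFactorial_eq_factorial_mul_choose n r
    have h' : ((n.descFactorial r : ℕ) : ℝ) = (r.factorial : ℝ) * (n.choose r : ℝ) := by
      exact_mod_cast congrArg (Nat.cast : ℕ → ℝ) h
    have hprodf : ∏ i ∈ range r, f i = (∏ i ∈ range r, ((n:ℝ) - i)) / (n:ℝ)^r := by
      rw [hf]
      rw [prod_div_distrib, prod_const, card_range]
    rw [hprodf, ← hcast, h']
    have hfac : (0:ℝ) < (r.factorial : ℝ) := by exact_mod_cast r.factorial_pos
    field_simp
  have key : 1 / (r.factorial : ℝ) - (n.choose r : ℝ) / (n:ℝ)^r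
      = (1 - ∏ i ∈ range r, f i) / (r.factorial : ℝ) := by
    rw [hchoose]; ring
  have hfac : (0:ℝ) < (r.factorial : ℝ) := by exact_mod_cast r.factorial_pos
  rw [key, abs_of_nonneg (div_nonneg (by linarith) hfac.le)]
  -- bound 1 - P
  have hsum : ∑ i ∈ range r, (1 - f i) = (∑ i ∈ range r, (i:ℝ)) / n := by
    rw [sum_div]
    refine sum_congr rfl fun i hi => ?_
    rw [hf]
    field_simp
    ring
  have hgauss : (∑ i ∈ range r, (i:ℝ)) = r * (r-1) / 2 := by
    have h2 := Finset.sum_range_id_mul_two r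
    have h3 := congrArg (Nat.cast : ℕ → ℝ) h2
    push_cast [Nat.cast_sub hr] at h3
    linarith
  have hbound : 1 - ∏ i ∈ range r, f i ≤ (r:ℝ) * ((r:ℝ)-1) / 2 / n := by
    have := aux_prod r f h0 h1
    rw [hsum, hgauss] at this
    linarith
  have hle1 : (1 - ∏ i ∈ range r, f i) / (r.factorial : ℝ)
      ≤ ((r:ℝ) * ((r:ℝ)-1) / 2 / n) / (r.factorial : ℝ) := by
    gcongr
  refine hle1.trans ?_
  -- r! = r * (r-1)!
  have hfacsplit : (r.factorial : ℝ) = (r:ℝ) * ((r-1).factorial : ℝ) := by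
    obtain ⟨k, rfl⟩ : ∃ k, r = k + 1 := ⟨r - 1, by omega⟩
    simp only [Nat.add_sub_cancel, Nat.factorial_succ]
    push_cast
    ring
  have hfac1 : (0:ℝ) < ((r-1).factorial : ℝ) := by exact_mod_cast (r-1).factorial_pos
  have hrpos : (0:ℝ) < (r:ℝ) := by exact_mod_cast hr
  rw [hfacsplit]
  rw [div_le_div_iff₀ (by positivity) (by positivity)]
  have h2r : (r:ℝ) - 1 ≤ 2 * 2^r := by
    have : (r:ℝ) ≤ 2^r := by exact_mod_cast Nat.le_of_lt (Nat.lt_two_pow_self (n := r))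
    have h2pos : (0:ℝ) < 2^r := by positivity
    linarith
  have expand : (r:ℝ) * ((r:ℝ)-1) / 2 / n * ((n:ℝ) * ((r-1).factorial : ℝ))
      = ((r:ℝ)-1)/2 * ((r:ℝ) * ((r-1).factorial : ℝ)) := by
    field_simp
  rw [expand]
  have : ((r:ℝ)-1)/2 * ((r:ℝ) * ((r-1).factorial : ℝ)) ≤ 2^r * ((r:ℝ) * ((r-1).factorial : ℝ)) := by
    gcongr ?_ * _
    linarith
  refine this.trans ?_
  have hrn' : (r:ℝ) ≤ (n:ℝ) := by exact_mod_cast hrn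
  have h2p : (0:ℝ) ≤ 2^r := by positivity
  nlinarith [hfac1, hrn', h2p, mul_le_mul_of_nonneg_right hrn' hfac1.le]
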